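/- arXiv:1610.09152 — 4 statements merged into one kernel-verified Lean document; each statement's English description precedes it below -/
import Mathlib

section
/- Let G1 and G2 be finite nonempty simple graphs. A real number μ is an eigenvalue of the Laplacian matrix L(G1 □ G2) of the box product graph if and only if there exist an eigenvalue λ1 of L(G1) and an eigenvalue λ2 of L(G2) such that μ = λ1 + λ2. -/
open Matrix SimpleGraph

instance SimpleGraph.boxProdAdjDecidable {α β : Type*} (G : SimpleGraph α) (H : SimpleGraph β)
    [DecidableRel G.Adj] [DecidableRel H.Adj] [DecidableEq α] [DecidableEq β] :
    DecidableRel (G □ H).Adj :=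
  fun _ _ => decidable_of_iff' _ boxProd_adj

lemma lap_boxProd_tensor {V1 V2 : Type*} [Fintype V1] [Fintype V2] [DecidableEq V1]
    [DecidableEq V2] (G1 : SimpleGraph V1) (G2 : SimpleGraph V2)
    [DecidableRel G1.Adj] [DecidableRel G2.Adj] (v : V1 → ℝ) (u : V2 → ℝ) :
    (G1 □ G2).lapMatrix ℝ *ᵥ (fun p => v p.1 * u p.2) =
      fun p => (G1.lapMatrix ℝ *ᵥ v) p.1 * u p.2 + v p.1 * (G2.lapMatrix ℝ *ᵥ u) p.2 := by
  funext p
  obtain ⟨a, b⟩ := p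
  simp only [lapMatrix_mulVec_apply]
  rw [degree_boxProd, neighborFinset_boxProd, Finset.sum_disjUnion, Finset.sum_product,
    Finset.sum_product]
  simp only [Finset.sum_singleton]
  rw [← Finset.sum_mul, ← Finset.mul_sum]
  push_cast
  ring

/-- If a function is "orthogonal" to every element of an orthonormal basis of Euclidean
space, it is zero. -/
lemma ob_complete {V : Type*} [Fintype V] (B : OrthonormalBasis V ℝ (EuclideanSpace ℝ V))
    (f : V → ℝ) (h : ∀ i, ∑ a, B i a * f a = 0) : f = 0 := by
  have hf : (WithLp.toLp 2 f : EuclideanSpace ℝ V) = 0 := by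
    have := B.repr.injective (a₁ := (WithLp.toLp 2 f : EuclideanSpace ℝ V)) (a₂ := 0)
    apply this
    ext i
    rw [B.repr_apply_apply]
    simp only [map_zero]
    rw [PiLp.inner_apply]
    simpa [mul_comm] using h i
  simpa using congrArg WithLp.ofLp hf

/-- A real number `μ` is an eigenvalue of the Laplacian of the box product of two finite
nonempty simple graphs iff it is the sum of an eigenvalue of `L(G1)` and one of `L(G2)`. -/
theorem lapMatrix_boxProd_eigenvalue_iff
    {V1 V2 : Type*} [Fintype V1] [Fintype V2] [DecidableEq V1] [DecidableEq V2]
    [Nonempty V1] [Nonempty V2]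
    (G1 : SimpleGraph V1) (G2 : SimpleGraph V2)
    [DecidableRel G1.Adj] [DecidableRel G2.Adj] (μ : ℝ) :
    (∃ x : V1 × V2 → ℝ, x ≠ 0 ∧ (G1 □ G2).lapMatrix ℝ *ᵥ x = μ • x) ↔
      ∃ lam1 lam2 : ℝ,
        (∃ v : V1 → ℝ, v ≠ 0 ∧ G1.lapMatrix ℝ *ᵥ v = lam1 • v) ∧
        (∃ u : V2 → ℝ, u ≠ 0 ∧ G2.lapMatrix ℝ *ᵥ u = lam2 • u) ∧
        μ = lam1 + lam2 := by
  constructor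
  · rintro ⟨x, hx0, hxe⟩
    have h1 : (G1.lapMatrix ℝ).IsHermitian := by
      rw [Matrix.IsHermitian, Matrix.conjTranspose_eq_transpose_of_trivial]
      exact G1.isSymm_lapMatrix (R := ℝ)
    have h2 : (G2.lapMatrix ℝ).IsHermitian := by
      rw [Matrix.IsHermitian, Matrix.conjTranspose_eq_transpose_of_trivial]
      exact G2.isSymm_lapMatrix (R := ℝ)
    set B1 := h1.eigenvectorBasis with hB1
    set B2 := h2.eigenvectorBasis with hB2
    -- find i j with nonzero dot product with x
    have key : ∃ i j, (fun p : V1 × V2 => B1 i p.1 * B2 j p.2) ⬝ᵥ x ≠ 0 := by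
      by_contra hcon
      push_neg at hcon
      apply hx0
      have hz : ∀ i (b : V2), ∑ a, B1 i a * x (a, b) = 0 := by
        intro i b
        have hg : (fun b => ∑ a, B1 i a * x (a, b)) = 0 := by
          apply ob_complete B2
          intro j
          have := hcon i j
          simp only [dotProduct] at this
          rw [Fintype.sum_prod_type] at this
          calc ∑ b, B2 j b * ∑ a, B1 i a * x (a, b)
              = ∑ b, ∑ a, B1 i a * B2 j b * x (a, b) := by
                congr 1; funext b; rw [Finset.mul_sum]; congr 1; funext a; ring
            _ = ∑ a, ∑ b, B1 i a * B2 j b * x (a, b) := by rw [Finset.sum_comm]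
            _ = 0 := this
        exact congrFun hg b
      funext p
      obtain ⟨a, b⟩ := p
      have : (fun a => x (a, b)) = 0 := by
        apply ob_complete B1
        intro i; exact hz i b
      exact congrFun this a
    obtain ⟨i, j, hij⟩ := key
    set w : V1 × V2 → ℝ := fun p => B1 i p.1 * B2 j p.2 with hw
    have e1 : G1.lapMatrix ℝ *ᵥ (fun a => B1 i a) = fun a => h1.eigenvalues i * B1 i a :=
      h1.mulVec_eigenvectorBasis i
    have e2 : G2.lapMatrix ℝ *ᵥ (fun b => B2 j b) = fun b => h2.eigenvalues j * B2 j b :=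
      h2.mulVec_eigenvectorBasis j
    have hwe : (G1 □ G2).lapMatrix ℝ *ᵥ w = (h1.eigenvalues i + h2.eigenvalues j) • w := by
      rw [hw, lap_boxProd_tensor, e1, e2]
      funext p
      simp only [Pi.smul_apply, smul_eq_mul]
      ring
    -- symmetric pairing
    have hsym : w ⬝ᵥ ((G1 □ G2).lapMatrix ℝ *ᵥ x) = ((G1 □ G2).lapMatrix ℝ *ᵥ w) ⬝ᵥ x := by
      rw [Matrix.dotProduct_mulVec, ← Matrix.mulVec_transpose,
        ((G1 □ G2).isSymm_lapMatrix (R := ℝ)).eq]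
    rw [hxe, hwe] at hsym
    have : μ * (w ⬝ᵥ x) = (h1.eigenvalues i + h2.eigenvalues j) * (w ⬝ᵥ x) := by
      simpa [dotProduct_smul, smul_dotProduct, smul_eq_mul] using hsym
    have hμ : μ = h1.eigenvalues i + h2.eigenvalues j := by
      exact mul_right_cancel₀ hij this
    refine ⟨h1.eigenvalues i, h2.eigenvalues j, ⟨⇑(B1 i), ?_, h1.mulVec_eigenvectorBasis i⟩,
      ⟨⇑(B2 j), ?_, h2.mulVec_eigenvectorBasis j⟩, hμ⟩
    · intro h
      exact B1.orthonormal.ne_zero i (by ext a; exact congrFun h a)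
    · intro h
      exact B2.orthonormal.ne_zero j (by ext a; exact congrFun h a)
  · rintro ⟨l1, l2, ⟨v, hv0, hv⟩, ⟨u, hu0, hu⟩, rfl⟩
    refine ⟨fun p => v p.1 * u p.2, ?_, ?_⟩
    · obtain ⟨a, ha⟩ := Function.ne_iff.mp hv0
      obtain ⟨b, hb⟩ := Function.ne_iff.mp hu0
      intro h
      exact mul_ne_zero ha hb (congrFun h (a, b))
    · rw [lap_boxProd_tensor, hv, hu]
      funext p
      simp [Pi.smul_apply, smul_eq_mul]
      ring
end

section
/- Let N ≥ 1 and let P_N be the path graph on vertices {0,1,...,N−1}. For every k with 0 ≤ k ≤ N−1, the vector v^(k) ∈ ℝ^N with components v^(k)_j = cos(πk(j + 1/2)/N), j = 0,...,N−1, satisfies L(P_N) v^(k) = 4 sin²(πk/(2N)) • v^(k); that is, v^(k) is an eigenvector of the path-graph Laplacian with eigenvalue 4 sin²(πk/(2N)). -/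
open Matrix SimpleGraph Real

/-- The path graph on vertices `{0, 1, ..., N-1}`: `i` and `j` are adjacent iff `|i - j| = 1`. -/
def pathG (N : ℕ) : SimpleGraph (Fin N) where
  Adj i j := i.val + 1 = j.val ∨ j.val + 1 = i.val
  symm := ⟨fun _ _ h => h.symm⟩
  loopless := ⟨fun i h => by rcases h with h | h <;> omega⟩

instance (N : ℕ) : DecidableRel (pathG N).Adj :=
  fun _ _ => inferInstanceAs (Decidable (_ ∨ _))

lemma pathG_adj (N : ℕ) (i j : Fin N) :
    (pathG N).Adj i j ↔ i.val + 1 = j.val ∨ j.val + 1 = i.val := Iff.rfl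

lemma dct_key (θ x : ℝ) : Real.cos (x - θ) + Real.cos (x + θ) = 2 * Real.cos θ * Real.cos x := by
  rw [Real.cos_sub, Real.cos_add]; ring

lemma dct_cos (θ : ℝ) : Real.cos θ = 1 - 2 * Real.sin (θ / 2) ^ 2 := by
  have h := Real.cos_two_mul (θ / 2)
  have h2 := Real.sin_sq_add_cos_sq (θ / 2)
  have h3 : 2 * (θ / 2) = θ := by ring
  rw [h3] at h
  nlinarith

lemma dct_refl (k : ℕ) (y : ℝ) :
    Real.cos (Real.pi * k + y) = Real.cos (Real.pi * k - y) := by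
  rw [Real.cos_add, Real.cos_sub, mul_comm Real.pi (k : ℝ), Real.sin_nat_mul_pi]
  ring

/-- The 1D-DCT vector `v^(k)`, `v^(k)_j = cos (π k (j + 1/2) / N)`, is an eigenvector of the
Laplacian of the path graph `P_N` with eigenvalue `4 sin² (π k / (2N))`. -/
theorem pathGraph_lapMatrix_dct_eigen (N : ℕ) (hN : 1 ≤ N) (k : Fin N) :
    (pathG N).lapMatrix ℝ *ᵥ
        (fun j : Fin N => Real.cos (Real.pi * k * ((j : ℝ) + 1 / 2) / N)) =
      (4 * Real.sin (Real.pi * k / (2 * N)) ^ 2) •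
        (fun j : Fin N => Real.cos (Real.pi * k * ((j : ℝ) + 1 / 2) / N)) := by
  have hN0 : (N : ℝ) ≠ 0 := Nat.cast_ne_zero.mpr (by omega)
  set θ : ℝ := Real.pi * k / N with hθ
  have hlam : 4 * Real.sin (Real.pi * (k : ℝ) / (2 * N)) ^ 2 = 2 - 2 * Real.cos θ := by
    have h : Real.pi * (k : ℝ) / (2 * N) = θ / 2 := by rw [hθ]; ring
    rw [h, dct_cos θ]; ring
  funext j
  rw [SimpleGraph.lapMatrix_mulVec_apply, Pi.smul_apply, smul_eq_mul]
  rcases Nat.lt_or_ge 1 N with hN2 | hN1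
  swap
  · -- N = 1
    have hk : (k : ℕ) = 0 := by omega
    have hnb : (pathG N).neighborFinset j = ∅ := by
      ext u
      simp only [SimpleGraph.mem_neighborFinset, pathG_adj, Finset.notMem_empty, iff_false]
      have := u.isLt
      have := j.isLt
      omega
    have hdeg : (pathG N).degree j = 0 := by
      rw [SimpleGraph.degree, hnb, Finset.card_empty]
    rw [hdeg, hnb, Finset.sum_empty]
    simp [hk]
  · rcases Nat.eq_zero_or_pos (j : ℕ) with hj0 | hjpos
    · -- j = 0 : single neighbor 1
      have hnb : (pathG N).neighborFinset j = {⟨1, by omega⟩} := by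
        ext u
        simp only [SimpleGraph.mem_neighborFinset, pathG_adj, Finset.mem_singleton, Fin.ext_iff]
        omega
      have hdeg : (pathG N).degree j = 1 := by
        rw [SimpleGraph.degree, hnb, Finset.card_singleton]
      rw [hdeg, hnb, Finset.sum_singleton]
      have hjc : ((j : ℕ) : ℝ) = 0 := by rw [hj0]; norm_num
      have e0 : Real.pi * (k : ℝ) * (((j : ℕ) : ℝ) + 1 / 2) / N = θ / 2 := by
        rw [hθ, hjc]; ring
      have e1 : Real.pi * (k : ℝ) * (((1 : ℕ) : ℝ) + 1 / 2) / N = θ / 2 + θ := by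
        rw [hθ]; push_cast; ring
      rw [show ((⟨1, by omega⟩ : Fin N) : ℕ) = 1 from rfl] at *
      rw [e0, e1, hlam, Nat.cast_one]
      have hkey : Real.cos (θ / 2) + Real.cos (θ / 2 + θ) =
          2 * Real.cos θ * Real.cos (θ / 2) := by
        have h := dct_key θ (θ / 2)
        rwa [show θ / 2 - θ = -(θ / 2) by ring, Real.cos_neg] at h
      linear_combination (-1 : ℝ) * hkey
    · rcases Nat.lt_or_ge ((j : ℕ) + 1) N with hjlt | hjtop
      · -- interior
        have hne : (⟨(j : ℕ) - 1, by omega⟩ : Fin N) ≠ ⟨(j : ℕ) + 1, by omega⟩ := by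
          simp only [ne_eq, Fin.ext_iff]; omega
        have hnb : (pathG N).neighborFinset j =
            {⟨(j : ℕ) - 1, by omega⟩, ⟨(j : ℕ) + 1, by omega⟩} := by
          ext u
          simp only [SimpleGraph.mem_neighborFinset, pathG_adj, Finset.mem_insert,
            Finset.mem_singleton, Fin.ext_iff]
          have := u.isLt
          omega
        have hdeg : (pathG N).degree j = 2 := by
          rw [SimpleGraph.degree, hnb, Finset.card_insert_of_notMem (by simpa using hne),
            Finset.card_singleton]
        rw [hdeg, hnb, Finset.sum_pair hne]
        have hcast : (((j : ℕ) - 1 : ℕ) : ℝ) = ((j : ℕ) : ℝ) - 1 := by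
          rw [Nat.cast_sub hjpos, Nat.cast_one]
        set x : ℝ := θ * (((j : ℕ) : ℝ) + 1 / 2) with hx
        have e0 : Real.pi * (k : ℝ) * (((j : ℕ) : ℝ) + 1 / 2) / N = x := by
          rw [hx, hθ]; ring
        have eL : Real.pi * (k : ℝ) * ((((j : ℕ) - 1 : ℕ) : ℝ) + 1 / 2) / N = x - θ := by
          rw [hcast, hx, hθ]; ring
        have eR : Real.pi * (k : ℝ) * ((((j : ℕ) + 1 : ℕ) : ℝ) + 1 / 2) / N = x + θ := by
          rw [hx, hθ]; push_cast; ring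
        rw [show ((⟨(j : ℕ) - 1, by omega⟩ : Fin N) : ℕ) = (j : ℕ) - 1 from rfl,
          show ((⟨(j : ℕ) + 1, by omega⟩ : Fin N) : ℕ) = (j : ℕ) + 1 from rfl,
          e0, eL, eR, hlam]
        push_cast
        linear_combination (-1 : ℝ) * dct_key θ x
      · -- j = N - 1
        have hjN : (j : ℕ) = N - 1 := by have := j.isLt; omega
        have hnb : (pathG N).neighborFinset j = {⟨(j : ℕ) - 1, by omega⟩} := by
          ext u
          simp only [SimpleGraph.mem_neighborFinset, pathG_adj, Finset.mem_singleton, Fin.ext_iff]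
          have := u.isLt
          omega
        have hdeg : (pathG N).degree j = 1 := by
          rw [SimpleGraph.degree, hnb, Finset.card_singleton]
        rw [hdeg, hnb, Finset.sum_singleton]
        have hjc : ((j : ℕ) : ℝ) = (N : ℝ) - 1 := by
          rw [hjN, Nat.cast_sub hN, Nat.cast_one]
        have hcast : (((j : ℕ) - 1 : ℕ) : ℝ) = (N : ℝ) - 2 := by
          rw [Nat.cast_sub (by omega), hjc]; ring
        set x : ℝ := θ * ((N : ℝ) - 1 / 2) with hx
        have e0 : Real.pi * (k : ℝ) * (((j : ℕ) : ℝ) + 1 / 2) / N = x := by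
          rw [hjc, hx, hθ]; ring
        have eL : Real.pi * (k : ℝ) * ((((j : ℕ) - 1 : ℕ) : ℝ) + 1 / 2) / N = x - θ := by
          rw [hcast, hx, hθ]; ring
        rw [show ((⟨(j : ℕ) - 1, by omega⟩ : Fin N) : ℕ) = (j : ℕ) - 1 from rfl,
          e0, eL, hlam, Nat.cast_one]
        have hx1 : x + θ = Real.pi * (k : ℕ) + θ / 2 := by
          rw [hx, hθ]; field_simp; ring
        have hx2 : Real.pi * (k : ℕ) - θ / 2 = x := by
          rw [hx, hθ]; field_simp
        have hrefl : Real.cos (x + θ) = Real.cos x := by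
          rw [hx1, dct_refl, hx2]
        linear_combination (-1 : ℝ) * dct_key θ x + hrefl
end

section
/- Let N ≥ 1 and let P_N be the path graph on {0,...,N−1}. Every eigenvector of the Laplacian L(P_N) is a scalar multiple of one of the 1D-DCT vectors v^(k), k = 0,...,N−1: if w ∈ ℝ^N is nonzero and L(P_N) w = λ • w for some λ ∈ ℝ, then there exist k ∈ {0,...,N−1} and c ∈ ℝ with w = c • v^(k). (Thus the 1D-DCT is, up to scaling of its vectors, the unique eigenbasis of L(P_N).) -/
open Matrix SimpleGraph Real

namespace PathDCT

lemma pathG_adj (N : ℕ) (i j : Fin N) :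
    (pathG N).Adj i j ↔ (i.val + 1 = j.val ∨ j.val + 1 = i.val) := Iff.rfl

/-- The 1D-DCT vectors. -/
noncomputable def V (N : ℕ) (k : Fin N) : Fin N → ℝ :=
  fun j : Fin N => Real.cos (Real.pi * k * ((j : ℝ) + 1 / 2) / N)

/-- The eigenvalues. -/
noncomputable def ew (N : ℕ) (k : Fin N) : ℝ := 2 - 2 * Real.cos (Real.pi * k / N)

lemma eigen (N : ℕ) (hN : 1 ≤ N) (k : Fin N) :
    (pathG N).lapMatrix ℝ *ᵥ V N k = ew N k • V N k := by
  have hNR : (0:ℝ) < N := by exact_mod_cast hN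
  funext i
  rw [SimpleGraph.lapMatrix_mulVec_apply, Pi.smul_apply, smul_eq_mul]
  by_cases h0 : i.val = 0
  · by_cases h1 : N = 1
    · -- single vertex, no neighbors
      have hF : (pathG N).neighborFinset i = ∅ := by
        ext j
        simp only [SimpleGraph.mem_neighborFinset, pathG_adj, Finset.notMem_empty, iff_false]
        rintro (hh | hh) <;> omega
      have hdeg : (pathG N).degree i = 0 := by
        rw [← SimpleGraph.card_neighborFinset_eq_degree, hF, Finset.card_empty]
      have hk : (k : ℝ) = 0 := by
        have : k.val = 0 := by omega
        simp [this]
      rw [hdeg, hF, Finset.sum_empty, ew, hk]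
      norm_num
    · -- left endpoint
      have hN2 : 2 ≤ N := by omega
      have hF : (pathG N).neighborFinset i = {⟨1, by omega⟩} := by
        ext j
        simp only [SimpleGraph.mem_neighborFinset, pathG_adj, Finset.mem_singleton, Fin.ext_iff]
        omega
      have hdeg : (pathG N).degree i = 1 := by
        rw [← SimpleGraph.card_neighborFinset_eq_degree, hF, Finset.card_singleton]
      rw [hdeg, hF, Finset.sum_singleton, ew]
      simp only [V]
      set a := Real.pi * k / (2 * N) with ha
      have hi0 : ((i : ℕ) : ℝ) = 0 := by rw [h0]; norm_num
      have e0 : Real.pi * k * (((i : ℕ) : ℝ) + 1 / 2) / N = a := by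
        rw [hi0, ha]; field_simp
        try ring
      have e1 : Real.pi * k * (((1 : ℕ) : ℝ) + 1 / 2) / N = 2 * a + a := by
        rw [ha]; field_simp
        try ring
      have et : Real.pi * k / N = 2 * a := by rw [ha]; field_simp
      rw [e0, e1, et, Real.cos_add, Real.sin_two_mul, Real.cos_two_mul]
      push_cast
      linear_combination (2 * Real.cos a) * Real.sin_sq_add_cos_sq a
  · by_cases hlast : i.val = N - 1
    · -- right endpoint
      have hN2 : 2 ≤ N := by omega
      have hF : (pathG N).neighborFinset i = {⟨N - 2, by omega⟩} := by
        ext j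
        simp only [SimpleGraph.mem_neighborFinset, pathG_adj, Finset.mem_singleton, Fin.ext_iff]
        omega
      have hdeg : (pathG N).degree i = 1 := by
        rw [← SimpleGraph.card_neighborFinset_eq_degree, hF, Finset.card_singleton]
      rw [hdeg, hF, Finset.sum_singleton, ew]
      simp only [V]
      set a := Real.pi * k / (2 * N) with ha
      have hiN : ((i : ℕ) : ℝ) = (N : ℝ) - 1 := by
        have : (i : ℕ) = N - 1 := hlast
        rw [this]; push_cast [Nat.cast_sub (by omega : 1 ≤ N)]; ring
      have hN2R : ((N - 2 : ℕ) : ℝ) = (N : ℝ) - 2 := by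
        push_cast [Nat.cast_sub (by omega : 2 ≤ N)]; ring
      have e0 : Real.pi * k * (((i : ℕ) : ℝ) + 1 / 2) / N = (k : ℕ) * Real.pi - a := by
        rw [hiN, ha]; field_simp
        try ring
      have e1 : Real.pi * k * (((N - 2 : ℕ) : ℝ) + 1 / 2) / N
          = (k : ℕ) * Real.pi - (2 * a + a) := by
        rw [hN2R, ha]; field_simp
        try ring
      have et : Real.pi * k / N = 2 * a := by rw [ha]; field_simp
      rw [e0, e1, et, Real.cos_nat_mul_pi_sub, Real.cos_nat_mul_pi_sub,
        Real.cos_add, Real.sin_two_mul, Real.cos_two_mul]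
      push_cast
      linear_combination ((-1 : ℝ)) ^ (k : ℕ) * (2 * Real.cos a) * Real.sin_sq_add_cos_sq a
    · -- interior vertex
      have hi1 : 1 ≤ i.val := by omega
      have hiN : i.val + 1 < N := by omega
      have hF : (pathG N).neighborFinset i
          = {⟨i.val - 1, by omega⟩, ⟨i.val + 1, by omega⟩} := by
        ext j
        simp only [SimpleGraph.mem_neighborFinset, pathG_adj, Finset.mem_insert,
          Finset.mem_singleton, Fin.ext_iff]
        omega
      have hdeg : (pathG N).degree i = 2 := by
        rw [← SimpleGraph.card_neighborFinset_eq_degree, hF,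
          Finset.card_insert_of_notMem (by simp [Fin.ext_iff]; try omega),
          Finset.card_singleton]
      rw [hdeg, hF, Finset.sum_insert (by simp [Fin.ext_iff]; try omega),
        Finset.sum_singleton, ew]
      simp only [V]
      set x := Real.pi * k * (((i : ℕ) : ℝ) + 1 / 2) / N with hx
      set t := Real.pi * k / N with ht
      have hm1 : ((i.val - 1 : ℕ) : ℝ) = ((i : ℕ) : ℝ) - 1 := by
        push_cast [Nat.cast_sub hi1]; ring
      have e1 : Real.pi * k * (((i.val - 1 : ℕ) : ℝ) + 1 / 2) / N = x - t := by
        rw [hm1, hx, ht]; field_simp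
        try ring
      have e2 : Real.pi * k * (((i.val + 1 : ℕ) : ℝ) + 1 / 2) / N = x + t := by
        push_cast
        rw [hx, ht]; field_simp
        try ring
      rw [e1, e2, Real.cos_sub, Real.cos_add]
      push_cast
      ring

lemma V_ne_zero (N : ℕ) (hN : 1 ≤ N) (k : Fin N) : V N k ≠ 0 := by
  have hNR : (0:ℝ) < N := by exact_mod_cast hN
  intro hcontra
  have h0 : V N k ⟨0, hN⟩ = 0 := by rw [hcontra]; rfl
  have harg : Real.pi * k * (((0 : ℕ) : ℝ) + 1 / 2) / N = Real.pi * k / (2 * N) := by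
    field_simp
    try ring
  have hklt : (k : ℝ) < N := by exact_mod_cast k.isLt
  have hpos : 0 < Real.cos (Real.pi * k / (2 * N)) := by
    apply Real.cos_pos_of_mem_Ioo
    constructor
    · have : (0:ℝ) ≤ Real.pi * k / (2 * N) := by positivity
      linarith [Real.pi_pos]
    · rw [div_lt_div_iff₀ (by positivity) (by norm_num : (0:ℝ) < 2)]
      nlinarith [Real.pi_pos]
  rw [V] at h0
  simp only at h0
  rw [show ((⟨0, hN⟩ : Fin N) : ℝ) = ((0 : ℕ) : ℝ) from rfl, harg] at h0
  linarith

lemma ew_injective (N : ℕ) (hN : 1 ≤ N) : Function.Injective (ew N) := by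
  have hNR : (0:ℝ) < N := by exact_mod_cast hN
  intro k j hkj
  have hcos : Real.cos (Real.pi * k / N) = Real.cos (Real.pi * j / N) := by
    rw [ew, ew] at hkj; linarith
  have hmem : ∀ m : Fin N, Real.pi * m / N ∈ Set.Icc 0 Real.pi := by
    intro m
    constructor
    · positivity
    · rw [div_le_iff₀ hNR]
      have : (m : ℝ) ≤ N := by exact_mod_cast m.isLt.le
      nlinarith [Real.pi_pos]
  have := Real.injOn_cos (hmem k) (hmem j) hcos
  have hπ : Real.pi ≠ 0 := Real.pi_ne_zero
  have hNne : (N : ℝ) ≠ 0 := ne_of_gt hNR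
  field_simp at this
  exact Fin.ext (by exact_mod_cast this)

end PathDCT

open PathDCT in
/-- Every eigenvector of the Laplacian of the path graph `P_N` is a scalar multiple of a
1D-DCT vector `v^(k)`: up to scaling, the 1D-DCT is the unique eigenbasis of `L(P_N)`. -/
theorem pathGraph_eigenvector_eq_smul_dct (N : ℕ) (hN : 1 ≤ N)
    (w : Fin N → ℝ) (hw : w ≠ 0) (lam : ℝ)
    (h : (pathG N).lapMatrix ℝ *ᵥ w = lam • w) :
    ∃ (k : Fin N) (c : ℝ),
      w = c • (fun j : Fin N => Real.cos (Real.pi * k * ((j : ℝ) + 1 / 2) / N)) := by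
  haveI : Nonempty (Fin N) := ⟨⟨0, hN⟩⟩
  set f : Module.End ℝ (Fin N → ℝ) := Matrix.mulVecLin ((pathG N).lapMatrix ℝ) with hf
  have heig : ∀ k : Fin N, f.HasEigenvector (ew N k) (V N k) := fun k =>
    ⟨Module.End.mem_eigenspace_iff.2
      (by rw [hf]; simpa [Matrix.mulVecLin_apply] using eigen N hN k),
     V_ne_zero N hN k⟩
  have hli : LinearIndependent ℝ (V N) :=
    Module.End.eigenvectors_linearIndependent' f (ew N) (ew_injective N hN) (V N) heig
  have hcard : Fintype.card (Fin N) = Module.finrank ℝ (Fin N → ℝ) := by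
    simp [Module.finrank_fintype_fun_eq_card]
  let b := basisOfLinearIndependentOfCardEqFinrank hli hcard
  have hb : ⇑b = V N := coe_basisOfLinearIndependentOfCardEqFinrank hli hcard
  set c := b.repr w with hc
  have hsum : ∑ k, c k • b k = w := b.sum_repr w
  have happ : f w = lam • w := by rw [hf]; simpa [Matrix.mulVecLin_apply] using h
  have hfb : ∀ k, f (b k) = ew N k • b k := by
    intro k
    rw [hb]
    rw [hf]; simpa [Matrix.mulVecLin_apply] using eigen N hN k
  have hs : ∑ k, (c k * ew N k) • b k = ∑ k, (lam * c k) • b k := by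
    have lhs : ∑ k, (c k * ew N k) • b k = f w := by
      rw [← hsum, map_sum]
      refine Finset.sum_congr rfl fun k _ => ?_
      rw [_root_.map_smul, hfb, smul_smul]
    have rhs : ∑ k, (lam * c k) • b k = lam • w := by
      rw [← hsum, Finset.smul_sum]
      refine Finset.sum_congr rfl fun k _ => ?_
      rw [smul_smul]
    rw [lhs, rhs, happ]
  have h2 : ∀ k, c k * ew N k = lam * c k := by
    intro k
    have e1 := b.repr_sum_self (fun k => c k * ew N k)
    have e2 := b.repr_sum_self (fun k => lam * c k)
    rw [hs, e2] at e1
    exact (congrFun e1 k).symm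
  obtain ⟨k0, hk0⟩ : ∃ k, c k ≠ 0 := by
    by_contra hall
    push_neg at hall
    apply hw
    rw [← hsum]
    simp [hall]
  have hlam : lam = ew N k0 := by
    have := h2 k0
    have h' : ew N k0 * c k0 = lam * c k0 := by linarith [h2 k0]
    exact (mul_right_cancel₀ hk0 h').symm
  have hcz : ∀ j, j ≠ k0 → c j = 0 := by
    intro j hj
    by_contra hne
    have h' : ew N j * c j = ew N k0 * c j := by
      have := h2 j
      rw [hlam] at this
      linarith
    have : ew N j = ew N k0 := mul_right_cancel₀ hne h'
    exact hj (ew_injective N hN this)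
  have hfinal : w = c k0 • V N k0 := by
    rw [← hsum, Finset.sum_eq_single k0 (fun j _ hj => by rw [hcz j hj, zero_smul])
      (fun hmem => absurd (Finset.mem_univ k0) hmem), hb]
  exact ⟨k0, c k0, hfinal⟩
end

section
/- Let A be a real N×N orthogonal matrix (AᵀA = I), y ∈ ℝ^N and λ > 0. Define x* ∈ ℝ^N componentwise by x*_i = (Aᵀy)_i if (Aᵀy)_i² > λ and x*_i = 0 otherwise. Then for every x ∈ ℝ^N, ‖A x* − y‖² + λ‖x*‖₀ ≤ ‖A x − y‖² + λ‖x‖₀; i.e., the hard-thresholded vector x* = H_{√λ}[Aᵀ y] is a global minimizer of the functional x ↦ ‖A x − y‖² + λ‖x‖₀. -/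
open Matrix Finset

lemma expand_sq {N : ℕ} (a b : Fin N → ℝ) :
    ∑ i, (a i - b i) ^ 2 = a ⬝ᵥ a - 2 * (a ⬝ᵥ b) + b ⬝ᵥ b := by
  simp only [dotProduct, Finset.mul_sum, ← Finset.sum_sub_distrib, ← Finset.sum_add_distrib]
  exact Finset.sum_congr rfl fun i _ => by ring

lemma mulVec_dot {N : ℕ} (A : Matrix (Fin N) (Fin N) ℝ) (u w : Fin N → ℝ) :
    (A *ᵥ u) ⬝ᵥ w = u ⬝ᵥ (Aᵀ *ᵥ w) := by
  rw [Matrix.dotProduct_mulVec, ← Matrix.mulVec_transpose, Matrix.transpose_transpose]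

lemma pointwise_min (lam z t : ℝ) (hlam : 0 < lam) :
    ((if z ^ 2 > lam then z else 0) - z) ^ 2 +
      lam * (if (if z ^ 2 > lam then z else 0) ≠ 0 then (1:ℝ) else 0) ≤
    (t - z) ^ 2 + lam * (if t ≠ 0 then (1:ℝ) else 0) := by
  by_cases hz : z ^ 2 > lam
  · have hz0 : z ≠ 0 := by
      intro h; rw [h] at hz; simp at hz; linarith
    simp only [hz, if_true, ne_eq, hz0, not_false_eq_true]
    by_cases ht : t = 0
    · subst ht
      simp only [ne_eq, not_true_eq_false, if_false]
      have : (0 - z) ^ 2 = z ^ 2 := by ring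
      nlinarith [sq_nonneg z]
    · simp only [ne_eq, ht, not_false_eq_true, if_true]
      nlinarith [sq_nonneg (z - z), sq_nonneg (t - z), sq_nonneg z]
  · simp only [hz, if_false, ne_eq, not_true_eq_false]
    push_neg at hz
    by_cases ht : t = 0
    · subst ht; simp
    · simp only [ne_eq, ht, not_false_eq_true, if_true, if_false]
      nlinarith [sq_nonneg (t - z)]

/-- For an orthogonal matrix `A`, the hard-thresholded vector `x* = H_√λ[Aᵀ y]` is a global
minimizer of the functional `x ↦ ‖A x - y‖² + λ‖x‖₀`. -/
theorem hard_thresholding_orthogonal_min {N : ℕ} (A : Matrix (Fin N) (Fin N) ℝ)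
    (hA : Aᵀ * A = 1) (y : Fin N → ℝ) (lam : ℝ) (hlam : 0 < lam) (x : Fin N → ℝ) :
    (∑ i, ((A *ᵥ fun j => if ((Aᵀ *ᵥ y) j) ^ 2 > lam then (Aᵀ *ᵥ y) j else 0) i - y i) ^ 2) +
        lam * ((univ.filter
          (fun j => (if ((Aᵀ *ᵥ y) j) ^ 2 > lam then (Aᵀ *ᵥ y) j else 0) ≠ 0)).card : ℝ) ≤
      (∑ i, ((A *ᵥ x) i - y i) ^ 2) +
        lam * ((univ.filter (fun j => x j ≠ 0)).card : ℝ) := by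
  have hAAT : A * Aᵀ = 1 := mul_eq_one_comm.mpr hA
  set z : Fin N → ℝ := Aᵀ *ᵥ y with hz
  have key : ∀ u : Fin N → ℝ, ∑ i, ((A *ᵥ u) i - y i) ^ 2 = ∑ i, (u i - z i) ^ 2 := by
    intro u
    rw [expand_sq, expand_sq]
    have h1 : (A *ᵥ u) ⬝ᵥ (A *ᵥ u) = u ⬝ᵥ u := by
      rw [mulVec_dot, Matrix.mulVec_mulVec, hA, Matrix.one_mulVec]
    have h2 : (A *ᵥ u) ⬝ᵥ y = u ⬝ᵥ z := by
      rw [mulVec_dot, hz]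
    have h3 : y ⬝ᵥ y = z ⬝ᵥ z := by
      rw [hz, mulVec_dot Aᵀ, Matrix.transpose_transpose, Matrix.mulVec_mulVec, hAAT,
        Matrix.one_mulVec]
    rw [h1, h2, h3]
  have cardeq : ∀ p : Fin N → Prop, ∀ _ : DecidablePred p,
      ((univ.filter p).card : ℝ) = ∑ i, if p i then (1:ℝ) else 0 := by
    intro p hp
    rw [Finset.card_filter]
    push_cast
    rfl
  rw [key, key, cardeq _ _, cardeq _ _, Finset.mul_sum, Finset.mul_sum,
    ← Finset.sum_add_distrib, ← Finset.sum_add_distrib]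
  apply Finset.sum_le_sum
  intro i _
  exact pointwise_min lam (z i) (x i) hlam
end
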